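/- arXiv:2001.00181 — 2 statements merged into one kernel-verified Lean document; each statement's English description precedes it below -/
import Mathlib

section
/- For any finite simple graph G with edge set E(G), the chromatic symmetric function satisfies X_G = Σ_{S ⊆ E(G)} (−1)^{|S|} p_{λ(S)}, where λ(S) is the partition of |V(G)| whose parts are the orders of the connected components of the spanning subgraph (V(G), S), and p_λ = Π_i p_{λ_i} is the product of power sum symmetric functions. -/
open Finset MvPolynomial

set_option maxHeartbeats 1000000

/-- The chromatic symmetric function of `G`, realized in `N` variables. -/
noncomputable def csf {V : Type} [Fintype V] (G : SimpleGraph V) (N : ℕ) :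
    MvPolynomial (Fin N) ℤ := by
  classical
  exact ∑ κ ∈ Finset.univ.filter
      (fun κ : V → Fin N => ∀ u v : V, G.Adj u v → κ u ≠ κ v),
    ∏ v : V, X (κ v)

/-- A semistandard filling of the Young diagram `D` with entries in `Fin N`:
rows weakly increase (left to right) and columns strictly increase (top to bottom). -/
def IsSSYTof (D : YoungDiagram) (N : ℕ) (T : D.cells → Fin N) : Prop :=
  (∀ c d : D.cells, (c : ℕ × ℕ).1 = (d : ℕ × ℕ).1 → (c : ℕ × ℕ).2 ≤ (d : ℕ × ℕ).2 →
      T c ≤ T d) ∧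
  (∀ c d : D.cells, (c : ℕ × ℕ).2 = (d : ℕ × ℕ).2 → (c : ℕ × ℕ).1 < (d : ℕ × ℕ).1 →
      T c < T d)

/-- The Schur polynomial of shape `D` in `N` variables, as the sum of content
monomials over all semistandard Young tableaux of shape `D` with entries in `Fin N`. -/
noncomputable def schurShape (N : ℕ) (D : YoungDiagram) : MvPolynomial (Fin N) ℤ := by
  classical
  exact ∑ T ∈ Finset.univ.filter (fun T : D.cells → Fin N => IsSSYTof D N T),
    ∏ c : D.cells, X (T c)

/-- The Young diagram of a partition. -/
def diagramOf {n : ℕ} (μ : n.Partition) : YoungDiagram :=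
  YoungDiagram.ofRowLens (μ.parts.sort (· ≥ ·)) (List.sortedGE_iff_pairwise.mpr (μ.parts.pairwise_sort (· ≥ ·)))

/-- The Schur polynomial `s_μ` in `N` variables. -/
noncomputable def schur (N : ℕ) {n : ℕ} (μ : n.Partition) : MvPolynomial (Fin N) ℤ :=
  schurShape N (diagramOf μ)

/-- A graph is Schur positive if its chromatic symmetric function, realized in any
number `N ≥ |V(G)|` of variables, is a nonnegative linear combination of the Schur
polynomials `s_λ`, `λ ⊢ |V(G)|`. -/
def SchurPositive {V : Type} [Fintype V] (G : SimpleGraph V) : Prop :=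
  ∀ N : ℕ, Fintype.card V ≤ N →
    ∃ c : (Fintype.card V).Partition → ℤ,
      (∀ μ, 0 ≤ c μ) ∧ csf G N = ∑ μ, c μ • schur N μ

/-- A graph is e-positive if its chromatic symmetric function, realized in any
number `N ≥ |V(G)|` of variables, is a nonnegative linear combination of the
polynomials `e_λ`, `λ ⊢ |V(G)|`. -/
def EPositive {V : Type} [Fintype V] (G : SimpleGraph V) : Prop :=
  ∀ N : ℕ, Fintype.card V ≤ N →
    ∃ c : (Fintype.card V).Partition → ℤ,
      (∀ μ, 0 ≤ c μ) ∧ csf G N = ∑ μ, c μ • esymmPart (Fin N) ℤ μ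

/-- A stable (independent) set of vertices. -/
def IsStableSet {V : Type} (G : SimpleGraph V) (b : Finset V) : Prop :=
  ∀ u ∈ b, ∀ v ∈ b, ¬ G.Adj u v

/-- A stable partition of `G`: a set partition of the vertex set all of whose
blocks are stable. -/
def IsStablePartition {V : Type} [Fintype V] [DecidableEq V] (G : SimpleGraph V)
    (P : Finpartition (Finset.univ : Finset V)) : Prop :=
  ∀ b ∈ P.parts, IsStableSet G b

/-- The type of a set partition: the multiset of its block sizes. -/
def typeOf {V : Type} [Fintype V] [DecidableEq V]
    (P : Finpartition (Finset.univ : Finset V)) : Multiset ℕ :=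
  P.parts.val.map Finset.card
/-- The power sum symmetric polynomial `p_λ = Π_i p_{λ_i}` in `N` variables, for a
multiset `λ` of positive integers. -/
noncomputable def pMult (N : ℕ) (μ : Multiset ℕ) : MvPolynomial (Fin N) ℤ :=
  (μ.map (psum (Fin N) ℤ)).prod

/-- The multiset of the orders of the connected components of a graph `H`. -/
noncomputable def compSizes {V : Type} [Fintype V] (H : SimpleGraph V) : Multiset ℕ := by
  classical
  exact ((Finset.univ.image fun v : V =>
    Finset.univ.filter fun u : V => H.Reachable v u).val).map Finset.card


section StanleyProof

variable {V : Type} [Fintype V] [DecidableEq V]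

private lemma mono_iff_reachable {N : ℕ} (S : Finset (Sym2 V)) (κ : V → Fin N) :
    (∀ e ∈ S, ∀ u v : V, s(u, v) = e → κ u = κ v) ↔
      ∀ u v : V, (SimpleGraph.fromEdgeSet (S : Set (Sym2 V))).Reachable u v → κ u = κ v := by
  constructor
  · intro h u v huv
    obtain ⟨w⟩ := huv
    induction w with
    | nil => rfl
    | cons ha _ ih =>
        rw [SimpleGraph.fromEdgeSet_adj] at ha
        exact (h _ ha.1 _ _ rfl).trans ih
  · intro h e he u v hev
    by_cases huv : u = v
    · rw [huv]
    · refine h u v (SimpleGraph.Adj.reachable ?_)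
      rw [SimpleGraph.fromEdgeSet_adj]
      exact ⟨by rw [hev]; exact he, huv⟩

private lemma sum_mono_eq_pMult (N : ℕ) (S : Finset (Sym2 V)) :
    ∑ κ ∈ Finset.univ.filter
        (fun κ : V → Fin N => ∀ e ∈ S, ∀ u v : V, s(u, v) = e → κ u = κ v),
      ∏ v : V, X (κ v) =
    pMult N (compSizes (SimpleGraph.fromEdgeSet (S : Set (Sym2 V)))) := by
  classical
  set H := SimpleGraph.fromEdgeSet (S : Set (Sym2 V)) with hH
  letI : Fintype H.ConnectedComponent := Fintype.ofFinite _
  set fib : H.ConnectedComponent → Finset V :=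
    fun c => Finset.univ.filter (fun v => H.connectedComponentMk v = c) with hfib
  have hfilter : (Finset.univ.filter
        (fun κ : V → Fin N => ∀ e ∈ S, ∀ u v : V, s(u, v) = e → κ u = κ v)) =
      Finset.univ.filter
        (fun κ : V → Fin N => ∀ u v : V, H.Reachable u v → κ u = κ v) :=
    Finset.filter_congr fun κ _ => mono_iff_reachable S κ
  rw [hfilter]
  have key : (∑ κ ∈ Finset.univ.filter
        (fun κ : V → Fin N => ∀ u v : V, H.Reachable u v → κ u = κ v),
      ∏ v : V, X (κ v)) =
      ∑ g : H.ConnectedComponent → Fin N,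
        ∏ c, (X (g c) : MvPolynomial (Fin N) ℤ) ^ (fib c).card := by
    refine Finset.sum_nbij' (fun κ => fun c => κ c.out)
      (fun g => fun v => g (H.connectedComponentMk v)) (fun _ _ => Finset.mem_univ _)
      ?_ ?_ ?_ ?_
    · intro g _
      simp only [Finset.mem_filter, Finset.mem_univ, true_and]
      intro u v huv
      rw [SimpleGraph.ConnectedComponent.sound huv]
    · intro κ hκ
      simp only [Finset.mem_filter, Finset.mem_univ, true_and] at hκ
      funext v
      exact (hκ v _ (SimpleGraph.ConnectedComponent.eq.mp
        ((H.connectedComponentMk v).out_eq).symm)).symm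
    · intro g _
      funext c
      exact congrArg g c.out_eq
    · intro κ hκ
      simp only [Finset.mem_filter, Finset.mem_univ, true_and] at hκ
      rw [← Finset.prod_fiberwise Finset.univ (fun v => H.connectedComponentMk v)
        (fun v => (X (κ v) : MvPolynomial (Fin N) ℤ))]
      refine Finset.prod_congr rfl fun c _ => ?_
      have hconst : ∀ v ∈ Finset.univ.filter (fun i => H.connectedComponentMk i = c),
          (X (κ v) : MvPolynomial (Fin N) ℤ) = X (κ c.out) := by
        intro v hv
        simp only [Finset.mem_filter, Finset.mem_univ, true_and] at hv
        exact congrArg X (hκ v c.out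
          (SimpleGraph.ConnectedComponent.exact (hv.trans c.out_eq.symm)))
      rw [Finset.prod_congr rfl hconst, Finset.prod_const]
  rw [key]
  have rhs : (∑ g : H.ConnectedComponent → Fin N,
      ∏ c, (X (g c) : MvPolynomial (Fin N) ℤ) ^ (fib c).card)
      = ∏ c : H.ConnectedComponent, psum (Fin N) ℤ (fib c).card := by
    rw [show (∏ c : H.ConnectedComponent, psum (Fin N) ℤ (fib c).card)
        = ∏ c : H.ConnectedComponent, ∑ i : Fin N, (X i : MvPolynomial (Fin N) ℤ) ^ (fib c).card
        from rfl,
      Finset.prod_univ_sum, Fintype.piFinset_univ]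
  rw [rhs]
  -- now identify compSizes
  have hfibinj : Function.Injective fib := by
    intro c d h
    have h1 : c.out ∈ fib c := by
      simp only [hfib, Finset.mem_filter, Finset.mem_univ, true_and]
      exact c.out_eq
    rw [h] at h1
    simp only [hfib, Finset.mem_filter, Finset.mem_univ, true_and] at h1
    exact c.out_eq.symm.trans h1
  have himg : (Finset.univ.image fun v : V => Finset.univ.filter fun u => H.Reachable v u)
      = Finset.univ.image fib := by
    ext b
    simp only [Finset.mem_image, Finset.mem_univ, true_and]
    constructor
    · rintro ⟨v, rfl⟩
      refine ⟨H.connectedComponentMk v, ?_⟩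
      ext u
      simp only [hfib, Finset.mem_filter, Finset.mem_univ, true_and]
      exact ⟨fun h => (SimpleGraph.ConnectedComponent.exact h).symm,
        fun h => SimpleGraph.ConnectedComponent.sound h.symm⟩
    · rintro ⟨c, rfl⟩
      refine ⟨c.out, ?_⟩
      ext u
      simp only [hfib, Finset.mem_filter, Finset.mem_univ, true_and]
      exact ⟨fun h => (SimpleGraph.ConnectedComponent.sound h.symm).trans c.out_eq,
        fun h => SimpleGraph.ConnectedComponent.exact (c.out_eq.trans h.symm)⟩
  have h3 : Multiset.map Finset.card (Finset.image fib Finset.univ).val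
      = Finset.univ.val.map fun c => (fib c).card := by
    rw [show Finset.image fib Finset.univ = Finset.univ.map ⟨fib, hfibinj⟩ from
      (Finset.map_eq_image ⟨fib, hfibinj⟩ Finset.univ).symm]
    simp [Finset.map_val, Multiset.map_map, Function.comp]
  have h2 := congrArg (fun t : Finset (Finset V) => Multiset.map Finset.card t.val) himg
  have hcs : compSizes H = Finset.univ.val.map (fun c => (fib c).card) := by
    unfold compSizes
    convert h2.trans h3 using 3
    ext b
    simp only [Finset.mem_image]
    constructor <;> exact fun ⟨a, ha, hb⟩ => ⟨a, ha, by rw [← hb]; ext u; simp⟩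
  rw [hcs]
  unfold pMult
  rw [Multiset.map_map, Finset.prod_eq_multiset_prod]
  rfl

end StanleyProof

/-- **Theorem (Stanley).** `X_G = Σ_{S ⊆ E(G)} (−1)^{|S|} p_{λ(S)}`, where `λ(S)`
is the partition of `|V(G)|` whose parts are the orders of the connected components
of the spanning subgraph `(V(G), S)`. -/
theorem csf_eq_sum_edge_subsets {V : Type} [Fintype V] [DecidableEq V]
    (G : SimpleGraph V) [DecidableRel G.Adj] (N : ℕ) (hN : Fintype.card V ≤ N) :
    csf G N = ∑ S ∈ G.edgeFinset.powerset,
      (-1 : ℤ) ^ S.card •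
        pMult N (compSizes (SimpleGraph.fromEdgeSet (S : Set (Sym2 V)))) := by
  classical
  unfold csf
  rw [Finset.sum_filter]
  have step1 : ∀ κ : V → Fin N,
      (if ∀ u v : V, G.Adj u v → κ u ≠ κ v then ∏ v : V, (X (κ v) : MvPolynomial (Fin N) ℤ)
        else 0)
        = ∑ S ∈ G.edgeFinset.powerset,
            (-1 : MvPolynomial (Fin N) ℤ) ^ S.card *
              ((if ∀ e ∈ S, ∀ u v : V, s(u, v) = e → κ u = κ v then 1 else 0) *
                ∏ v : V, X (κ v)) := by
    intro κ
    have h1 : (if ∀ u v : V, G.Adj u v → κ u ≠ κ v then (1 : MvPolynomial (Fin N) ℤ) else 0)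
        = ∏ e ∈ G.edgeFinset,
            ((- if ∀ u v : V, s(u, v) = e → κ u = κ v then 1 else 0)
              + (1 : MvPolynomial (Fin N) ℤ)) := by
      by_cases h : ∀ u v : V, G.Adj u v → κ u ≠ κ v
      · rw [if_pos h]
        refine (Finset.prod_eq_one fun e he => ?_).symm
        rw [if_neg, neg_zero, zero_add]
        rw [SimpleGraph.mem_edgeFinset] at he
        intro hm
        induction e using Sym2.ind with
        | _ a b => exact h a b (G.mem_edgeSet.mp he) (hm a b rfl)
      · rw [if_neg h]
        push_neg at h
        obtain ⟨u, v, hadj, heq⟩ := h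
        refine (Finset.prod_eq_zero (i := s(u, v))
          (SimpleGraph.mem_edgeFinset.mpr hadj) ?_).symm
        have hcond : ∀ a b : V, s(a, b) = s(u, v) → κ a = κ b := by
          intro a b hab
          rcases Sym2.eq_iff.mp hab with ⟨rfl, rfl⟩ | ⟨rfl, rfl⟩
          · exact heq
          · exact heq.symm
        rw [if_pos hcond, neg_add_cancel]
    have h2 : (if ∀ u v : V, G.Adj u v → κ u ≠ κ v
          then ∏ v : V, (X (κ v) : MvPolynomial (Fin N) ℤ) else 0)
        = (if ∀ u v : V, G.Adj u v → κ u ≠ κ v then (1 : MvPolynomial (Fin N) ℤ) else 0)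
            * ∏ v : V, X (κ v) := by
      rw [boole_mul]
    have hneg : ∀ (T : Finset (Sym2 V)) (f : Sym2 V → MvPolynomial (Fin N) ℤ),
        (∏ e ∈ T, -f e) = (-1) ^ T.card * ∏ e ∈ T, f e := by
      intro T f
      calc (∏ e ∈ T, -f e) = ∏ e ∈ T, (-1) * f e :=
            Finset.prod_congr rfl fun e _ => (neg_one_mul _).symm
        _ = (∏ _e ∈ T, (-1 : MvPolynomial (Fin N) ℤ)) * ∏ e ∈ T, f e :=
            Finset.prod_mul_distrib
        _ = (-1) ^ T.card * ∏ e ∈ T, f e := by rw [Finset.prod_const]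
    rw [h2, h1, Finset.prod_add, Finset.sum_mul]
    refine Finset.sum_congr rfl fun T hT => ?_
    rw [Finset.prod_const_one, mul_one, hneg, Finset.prod_boole, mul_assoc]
    congr 2
    congr <;> try exact Subsingleton.elim _ _
  refine Eq.trans (Finset.sum_congr rfl
      (g := fun κ : V → Fin N => ∑ S ∈ G.edgeFinset.powerset,
        (-1 : MvPolynomial (Fin N) ℤ) ^ S.card *
          ((if ∀ e ∈ S, ∀ u v : V, s(u, v) = e → κ u = κ v then 1 else 0) *
            ∏ v : V, X (κ v)))
      (fun κ _ => ?_)) ?_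
  · refine Eq.trans ?_ (step1 κ)
    congr <;> try exact Subsingleton.elim _ _
  rw [Finset.sum_comm]
  refine Finset.sum_congr rfl fun S hS => ?_
  rw [← Finset.mul_sum]
  have h3 : (∑ κ : V → Fin N,
      (if ∀ e ∈ S, ∀ u v : V, s(u, v) = e → κ u = κ v then (1 : MvPolynomial (Fin N) ℤ) else 0)
        * ∏ v : V, X (κ v))
      = ∑ κ ∈ Finset.univ.filter
          (fun κ : V → Fin N => ∀ e ∈ S, ∀ u v : V, s(u, v) = e → κ u = κ v),
        ∏ v : V, X (κ v) := by
    rw [Finset.sum_filter]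
    exact Finset.sum_congr rfl fun κ _ => by rw [boole_mul]
  refine Eq.trans (congrArg (fun z : MvPolynomial (Fin N) ℤ =>
      (-1 : MvPolynomial (Fin N) ℤ) ^ S.card * z)
      (Eq.trans ?_ (h3.trans (sum_mono_eq_pMult N S)))) ?_
  · congr <;> exact Subsingleton.elim _ _
  · rw [zsmul_eq_mul]
    push_cast
    ring
end

section
/- Every Schur positive connected bipartite finite simple graph on at least 2 vertices has a balanced stable bipartition, i.e., a partition of its vertex set into two stable sets whose cardinalities differ by at most 1. -/
open Finset MvPolynomial

section Counting
variable {α : Type} [Fintype α] [DecidableEq α] {N : ℕ}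

/-- number of elements of `α` mapped by `κ` to `i` -/
def cnt (κ : α → Fin N) (i : Fin N) : ℕ := (Finset.univ.filter (fun v => κ v = i)).card

lemma prod_X_eq (s : Finset α) (κ : α → Fin N) :
    (∏ v ∈ s, (X (κ v) : MvPolynomial (Fin N) ℤ)) =
      monomial (∑ v ∈ s, Finsupp.single (κ v) 1) 1 := by
  classical
  induction s using Finset.induction_on with
  | empty => simp
  | insert a s h ih =>
      rw [Finset.prod_insert h, Finset.sum_insert h, ih]
      rw [show (X (κ _) : MvPolynomial (Fin N) ℤ) = monomial (Finsupp.single (κ _) 1) 1 from rfl,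
        monomial_mul, one_mul]

lemma cnt_sum_single (κ : α → Fin N) (i : Fin N) :
    (∑ v : α, Finsupp.single (κ v) (1:ℕ)) i = cnt κ i := by
  classical
  rw [Finset.sum_apply', cnt, Finset.card_filter]
  exact Finset.sum_congr rfl fun v _ => by rw [Finsupp.single_apply]

lemma coeff_count (s : Finset (α → Fin N)) (m : Fin N →₀ ℕ) :
    coeff m (∑ κ ∈ s, ∏ v : α, (X (κ v) : MvPolynomial (Fin N) ℤ)) =
      ((s.filter (fun κ => ∀ i, cnt κ i = m i)).card : ℤ) := by
  classical
  rw [coeff_sum]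
  have h1 : ∀ κ ∈ s, coeff m (∏ v : α, (X (κ v) : MvPolynomial (Fin N) ℤ))
      = if (∀ i, cnt κ i = m i) then (1:ℤ) else 0 := by
    intro κ _
    rw [prod_X_eq, coeff_monomial]
    refine if_congr ?_ rfl rfl
    rw [DFunLike.ext_iff]
    exact forall_congr' fun i => by rw [cnt_sum_single]
  rw [Finset.sum_congr rfl h1, Finset.sum_boole]

lemma cnt_update (T : α → Fin N) (c0 : α) (y : Fin N) (hy : y ≠ T c0) :
    cnt (Function.update T c0 y) y = cnt T y + 1 ∧
    cnt (Function.update T c0 y) (T c0) = cnt T (T c0) - 1 ∧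
    ∀ i, i ≠ y → i ≠ T c0 → cnt (Function.update T c0 y) i = cnt T i := by
  classical
  refine ⟨?_, ?_, ?_⟩
  · have : (univ.filter (fun v => Function.update T c0 y v = y))
        = insert c0 (univ.filter (fun v => T v = y)) := by
      ext v
      by_cases h : v = c0 <;> simp [h, Function.update_apply, hy.symm]
    rw [cnt, this, Finset.card_insert_of_notMem (by simp [hy.symm]), cnt]
  · have : (univ.filter (fun v => Function.update T c0 y v = T c0))
        = (univ.filter (fun v => T v = T c0)).erase c0 := by
      ext v
      by_cases h : v = c0 <;> simp [h, Function.update_apply, hy]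
    rw [cnt, this, Finset.card_erase_of_mem (by simp), cnt]
  · intro i hiy hic
    unfold cnt
    congr 1
    ext v
    by_cases h : v = c0 <;> simp [h, Function.update_apply, hiy.symm, Ne.symm hic]

end Counting

noncomputable def dd {N : ℕ} (i0 i1 : Fin N) (e0 e1 : ℕ) : Fin N →₀ ℕ :=
  Finsupp.single i0 e0 + Finsupp.single i1 e1

lemma dd_apply {N : ℕ} {i0 i1 : Fin N} (h : i0 ≠ i1) (e0 e1 : ℕ) (i : Fin N) :
    dd i0 i1 e0 e1 i = if i = i0 then e0 else if i = i1 then e1 else 0 := by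
  classical
  unfold dd
  rw [Finsupp.add_apply, Finsupp.single_apply, Finsupp.single_apply]
  by_cases h1 : i = i0
  · subst h1; simp [Ne.symm h]
  · by_cases h2 : i = i1
    · subst h2; simp [h, h1]
    · simp [h1, h2]
      exact ⟨fun hh => absurd hh.symm h1, fun hh => absurd hh.symm h2⟩

section Bip
variable {V : Type} [Fintype V] [DecidableEq V] {G : SimpleGraph V}

lemma mem_compl_iff {A B : Finset V} (hd : Disjoint A B) (hu : A ∪ B = univ) :
    ∀ v : V, v ∈ B ↔ v ∉ A := by
  intro v
  constructor
  · intro hB hA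
    exact (Finset.disjoint_left.mp hd) hA hB
  · intro hA
    have : v ∈ A ∪ B := hu ▸ Finset.mem_univ v
    rcases Finset.mem_union.mp this with h | h
    · exact absurd h hA
    · exact h

lemma adj_key {A B : Finset V} (hd : Disjoint A B) (hu : A ∪ B = univ)
    (hA : IsStableSet G A) (hB : IsStableSet G B) :
    ∀ u v : V, G.Adj u v → (u ∈ A ↔ v ∉ A) := by
  intro u v huv
  constructor
  · intro hu' hv'
    exact hA u hu' v hv' huv
  · intro hv'
    have hvB : v ∈ B := (mem_compl_iff hd hu v).mpr hv'
    by_contra huA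
    have huB : u ∈ B := (mem_compl_iff hd hu u).mpr huA
    exact hB u huB v hvB huv

lemma walk_parity {A A' : Finset V}
    (key : ∀ u v : V, G.Adj u v → (u ∈ A ↔ v ∉ A))
    (key' : ∀ u v : V, G.Adj u v → (u ∈ A' ↔ v ∉ A'))
    {u v : V} (p : G.Walk u v) : ((u ∈ A ↔ v ∈ A) ↔ (u ∈ A' ↔ v ∈ A')) := by
  induction p with
  | nil => tauto
  | @cons x y z h q ih =>
      have h1 := key x y h
      have h2 := key' x y h
      tauto

lemma bip_unique (hconn : G.Connected) {A B A' B' : Finset V}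
    (hd : Disjoint A B) (hu : A ∪ B = univ)
    (hA : IsStableSet G A) (hB : IsStableSet G B)
    (hd' : Disjoint A' B') (hu' : A' ∪ B' = univ)
    (hA' : IsStableSet G A') (hB' : IsStableSet G B') :
    (A' = A ∧ B' = B) ∨ (A' = B ∧ B' = A) := by
  have key := adj_key hd hu hA hB
  have key' := adj_key hd' hu' hA' hB'
  obtain ⟨u0⟩ := hconn.nonempty
  have par : ∀ v : V, ((u0 ∈ A ↔ v ∈ A) ↔ (u0 ∈ A' ↔ v ∈ A')) := by
    intro v
    obtain ⟨p⟩ := hconn.preconnected u0 v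
    exact walk_parity key key' p
  have hBc := mem_compl_iff hd hu
  have hBc' := mem_compl_iff hd' hu'
  by_cases h0 : (u0 ∈ A ↔ u0 ∈ A')
  · left
    have hAA : A' = A := by
      ext v
      have := par v
      tauto
    refine ⟨hAA, ?_⟩
    ext v
    have := hBc v
    have := hBc' v
    rw [hAA] at this
    tauto
  · right
    have hAB : A' = B := by
      ext v
      have := par v
      have := hBc v
      tauto
    refine ⟨hAB, ?_⟩
    ext v
    have h1 := hBc v
    have h2 := hBc' v
    have h3 := Finset.ext_iff.mp hAB v
    tauto

lemma exists_edge (hconn : G.Connected) (hcard : 2 ≤ Fintype.card V) :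
    ∃ u v : V, G.Adj u v := by
  obtain ⟨u, v, huv⟩ := Fintype.exists_pair_of_one_lt_card (α := V) (by omega)
  obtain ⟨p⟩ := hconn.preconnected u v
  cases p with
  | nil => exact absurd rfl huv
  | cons h q => exact ⟨_, _, h⟩

end Bip

lemma coloring_classify {V : Type} [Fintype V] [DecidableEq V] {G : SimpleGraph V}
    (hconn : G.Connected) {A B : Finset V}
    (hd : Disjoint A B) (hu : A ∪ B = univ)
    (hA : IsStableSet G A) (hB : IsStableSet G B)
    {N : ℕ} {i0 i1 : Fin N} (h01 : i0 ≠ i1)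
    {κ : V → Fin N} (hp : ∀ u v : V, G.Adj u v → κ u ≠ κ v) {e0 e1 : ℕ}
    (hcnt : ∀ i, cnt κ i = if i = i0 then e0 else if i = i1 then e1 else 0) :
    ((univ.filter (fun v => κ v = i0)) = A ∧ (univ.filter (fun v => κ v = i1)) = B
        ∧ e0 = A.card ∧ e1 = B.card) ∨
    ((univ.filter (fun v => κ v = i0)) = B ∧ (univ.filter (fun v => κ v = i1)) = A
        ∧ e0 = B.card ∧ e1 = A.card) := by
  classical
  set F0 := univ.filter (fun v => κ v = i0) with hF0
  set F1 := univ.filter (fun v => κ v = i1) with hF1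
  have hvals : ∀ v : V, κ v = i0 ∨ κ v = i1 := by
    intro v
    by_contra hcon
    push_neg at hcon
    have h0 : cnt κ (κ v) = 0 := by rw [hcnt, if_neg hcon.1, if_neg hcon.2]
    rw [cnt, Finset.card_eq_zero] at h0
    have : v ∈ univ.filter (fun w => κ w = κ v) := by simp
    rw [h0] at this
    exact absurd this (Finset.notMem_empty v)
  have hd' : Disjoint F0 F1 := by
    rw [Finset.disjoint_left]
    intro v hv0 hv1
    rw [hF0, Finset.mem_filter] at hv0
    rw [hF1, Finset.mem_filter] at hv1
    exact h01 (hv0.2 ▸ hv1.2)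
  have hu' : F0 ∪ F1 = univ := by
    apply Finset.eq_univ_of_forall
    intro v
    rcases hvals v with h | h
    · exact Finset.mem_union_left _ (by simp [hF0, h])
    · exact Finset.mem_union_right _ (by simp [hF1, h])
  have hA' : IsStableSet G F0 := by
    intro u hu' v hv' hadj
    rw [hF0, Finset.mem_filter] at hu' hv'
    exact hp u v hadj (hu'.2.trans hv'.2.symm)
  have hB' : IsStableSet G F1 := by
    intro u hu' v hv' hadj
    rw [hF1, Finset.mem_filter] at hu' hv'
    exact hp u v hadj (hu'.2.trans hv'.2.symm)
  have hcnt0 : e0 = F0.card := by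
    have := hcnt i0
    rw [if_pos rfl] at this
    exact this.symm
  have hcnt1 : e1 = F1.card := by
    have := hcnt i1
    rw [if_neg (Ne.symm h01), if_pos rfl] at this
    exact this.symm
  rcases bip_unique hconn hd hu hA hB hd' hu' hA' hB' with ⟨h1, h2⟩ | ⟨h1, h2⟩
  · exact Or.inl ⟨h1, h2, by rw [hcnt0, h1], by rw [hcnt1, h2]⟩
  · exact Or.inr ⟨h1, h2, by rw [hcnt0, h1], by rw [hcnt1, h2]⟩

lemma ssyt_surgery {N : ℕ} (D : YoungDiagram) {i0 i1 : Fin N} (h01 : i0 < i1)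
    {a b : ℕ} (hab : b + 2 ≤ a) {T : D.cells → Fin N} (hT : IsSSYTof D N T)
    (hcnt : ∀ i, cnt T i = if i = i0 then a else if i = i1 then b else 0) :
    (∃ T' : D.cells → Fin N, IsSSYTof D N T' ∧
      ∀ i, cnt T' i = if i = i0 then a - 1 else if i = i1 then b + 1 else 0) ∨
    (∃ T' : D.cells → Fin N, IsSSYTof D N T' ∧
      ∀ i, cnt T' i = if i = i0 then a + 1 else if i = i1 then b - 1 else 0) := by
  classical
  have hne : i0 ≠ i1 := ne_of_lt h01
  -- every entry is i0 or i1
  have hvals : ∀ c : D.cells, T c = i0 ∨ T c = i1 := by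
    intro c
    by_contra hcon
    push_neg at hcon
    have h0 : cnt T (T c) = 0 := by
      rw [hcnt, if_neg hcon.1, if_neg hcon.2]
    have hc : c ∈ univ.filter (fun v => T v = T c) := by simp
    rw [cnt, Finset.card_eq_zero] at h0
    rw [h0] at hc
    exact absurd hc (Finset.notMem_empty c)
  -- entries in rows ≥ 1 are i1
  have hrow1 : ∀ c : D.cells, 1 ≤ (c : ℕ × ℕ).1 → T c = i1 := by
    rintro ⟨⟨ci, cj⟩, hc⟩ hci
    have hcD : (ci, cj) ∈ D := (D.mem_cells _).mp hc
    have hm : ((0:ℕ), cj) ∈ D.cells := (D.mem_cells _).mpr (D.up_left_mem (Nat.zero_le _) le_rfl hcD)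
    have hlt := hT.2 ⟨(0, cj), hm⟩ ⟨(ci, cj), hc⟩ rfl (show (0:ℕ) < ci from hci)
    rcases hvals ⟨(ci, cj), hc⟩ with h | h
    · exfalso
      rcases hvals ⟨(0, cj), hm⟩ with h0 | h0 <;> rw [h, h0] at hlt
      · exact absurd hlt (lt_irrefl _)
      · exact absurd hlt (not_lt.mpr h01.le)
    · exact h
  have hzero_row : ∀ c : D.cells, T c = i0 → (c : ℕ × ℕ).1 = 0 := by
    intro c h
    by_contra hne'
    have := hrow1 c (by omega)
    rw [h] at this
    exact hne this
  -- the set of zeros has size a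
  have hZa : (univ.filter (fun c : D.cells => T c = i0)).card = a := by
    have h := hcnt i0
    rw [if_pos rfl] at h
    exact h
  set Z := univ.filter (fun c : D.cells => T c = i0) with hZdef
  set S := Z.image (fun c : D.cells => (c : ℕ × ℕ).2) with hSdef
  have hZval : ∀ c ∈ Z, (c : ℕ × ℕ) = (0, (c : ℕ × ℕ).2) := by
    intro c hc
    have : T c = i0 := by simp [hZdef] at hc; exact hc
    have h0 := hzero_row c this
    rw [← h0]
  have hScard : S.card = a := by
    rw [hSdef, Finset.card_image_of_injOn, hZa]
    intro c hc d hd hcd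
    have hcd' : (c : ℕ × ℕ).2 = (d : ℕ × ℕ).2 := hcd
    apply Subtype.ext
    rw [hZval c (Finset.mem_coe.mp hc), hZval d (Finset.mem_coe.mp hd), hcd']
  have hSdown : ∀ j ∈ S, ∀ j', j' ≤ j → j' ∈ S := by
    intro j hj j' hj'
    rw [hSdef, Finset.mem_image] at hj
    obtain ⟨c, hcZ, hcj⟩ := hj
    have hcv : (c : ℕ × ℕ) = (0, j) := by rw [hZval c hcZ, hcj]
    have hcD : ((0:ℕ), j) ∈ D := by
      have := (D.mem_cells _).mp c.2
      rwa [hcv] at this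
    have hmem' : ((0:ℕ), j') ∈ D.cells := (D.mem_cells _).mpr (D.up_left_mem le_rfl hj' hcD)
    have hTj' : T ⟨(0, j'), hmem'⟩ = i0 := by
      have hle := hT.1 ⟨(0, j'), hmem'⟩ c (by rw [hcv]) (by rw [hcv]; exact hj')
      have hTc : T c = i0 := by simp [hZdef] at hcZ; exact hcZ
      rcases hvals ⟨(0, j'), hmem'⟩ with h | h
      · exact h
      · exfalso; rw [h, hTc] at hle; exact absurd hle (not_le.mpr h01)
    rw [hSdef, Finset.mem_image]
    exact ⟨⟨(0, j'), hmem'⟩, by simp [hZdef, hTj'], rfl⟩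
  have hSj : ∀ j, j ∈ S ↔ j < a := by
    intro j
    constructor
    · intro hj
      have hsub : Finset.range (j + 1) ⊆ S := by
        intro k hk
        exact hSdown j hj k (by simpa using Nat.lt_succ_iff.mp (Finset.mem_range.mp hk))
      have := Finset.card_le_card hsub
      rw [Finset.card_range, hScard] at this
      omega
    · intro hj
      by_contra hjS
      have hsub : S ⊆ Finset.range j := by
        intro k hk
        rw [Finset.mem_range]
        by_contra hkj
        exact hjS (hSdown k hk j (by omega))
      have := Finset.card_le_card hsub
      rw [Finset.card_range, hScard] at this
      omega
  -- characterization of zeros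
  have hz' : ∀ c : D.cells, T c = i0 ↔ ((c : ℕ × ℕ).1 = 0 ∧ (c : ℕ × ℕ).2 < a) := by
    intro c
    constructor
    · intro h
      refine ⟨hzero_row c h, ?_⟩
      rw [← hSj]
      rw [hSdef, Finset.mem_image]
      exact ⟨c, by simp [hZdef, h], rfl⟩
    · rintro ⟨h0, hja⟩
      have : (c : ℕ × ℕ).2 ∈ S := (hSj _).mpr hja
      rw [hSdef, Finset.mem_image] at this
      obtain ⟨d, hdZ, hdj⟩ := this
      have hcv : (c : ℕ × ℕ) = (0, (c : ℕ × ℕ).2) := by rw [← h0]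
      have : d = c := by
        apply Subtype.ext
        rw [hZval d hdZ, hdj]
        exact hcv.symm
      rw [← this]
      simp [hZdef] at hdZ
      exact hdZ
  have hmemD : ∀ j, j < a → ((0:ℕ), j) ∈ D.cells := by
    intro j hj
    have : j ∈ S := (hSj j).mpr hj
    rw [hSdef, Finset.mem_image] at this
    obtain ⟨c, hcZ, hcj⟩ := this
    have := c.2
    rwa [show (c : ℕ × ℕ) = (0, j) by rw [hZval c hcZ, hcj]] at this
  by_cases hpa : ((0:ℕ), a) ∈ D.cells
  · -- flip the i1 at (0,a) to i0 : content (a+1, b-1)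
    right
    set c0 : D.cells := ⟨(0, a), hpa⟩ with hc0def
    have hTc0 : T c0 = i1 := by
      rcases hvals c0 with h | h
      · exfalso
        have := ((hz' c0).mp h).2
        simp [hc0def] at this
      · exact h
    have hy : i0 ≠ T c0 := by rw [hTc0]; exact hne
    refine ⟨Function.update T c0 i0, ⟨?_, ?_⟩, ?_⟩
    · -- rows
      rintro ⟨⟨ci, cj⟩, hcm⟩ ⟨⟨di, dj⟩, hdm⟩ h1 h2
      have h1' : ci = di := h1
      have h2' : cj ≤ dj := h2
      by_cases hceq : (⟨(ci, cj), hcm⟩ : D.cells) = c0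
      · rw [hceq, Function.update_self]
        by_cases hdeq : (⟨(di, dj), hdm⟩ : D.cells) = c0
        · rw [hdeq, Function.update_self]
        · rw [Function.update_of_ne hdeq]
          rcases hvals ⟨(di, dj), hdm⟩ with h | h
          · exact h.ge
          · exact h01.le.trans h.ge
      · rw [Function.update_of_ne hceq]
        by_cases hdeq : (⟨(di, dj), hdm⟩ : D.cells) = c0
        · rw [hdeq, Function.update_self]
          have hdv : di = 0 ∧ dj = a := by
            have := congrArg Subtype.val hdeq
            rw [hc0def] at this
            simpa [Prod.mk.injEq] using this
          have hcoord : ¬ (ci = 0 ∧ cj = a) := by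
            rintro ⟨x, y⟩
            exact hceq (Subtype.ext (show (ci, cj) = ((0:ℕ), a) by rw [x, y]))
          have hci0 : ci = 0 := by omega
          have hcja : cj < a := by omega
          rw [(hz' ⟨(ci, cj), hcm⟩).mpr ⟨hci0, hcja⟩]
        · rw [Function.update_of_ne hdeq]
          exact hT.1 _ _ h1 h2
    · -- columns
      rintro ⟨⟨ci, cj⟩, hcm⟩ ⟨⟨di, dj⟩, hdm⟩ h1 h2
      have h1' : cj = dj := h1
      have h2' : ci < di := h2
      by_cases hdeq : (⟨(di, dj), hdm⟩ : D.cells) = c0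
      · exfalso
        have hdv : di = 0 ∧ dj = a := by
          have := congrArg Subtype.val hdeq
          rw [hc0def] at this
          simpa [Prod.mk.injEq] using this
        omega
      by_cases hceq : (⟨(ci, cj), hcm⟩ : D.cells) = c0
      · have hcv : ci = 0 ∧ cj = a := by
          have := congrArg Subtype.val hceq
          rw [hc0def] at this
          simpa [Prod.mk.injEq] using this
        rw [hceq, Function.update_self, Function.update_of_ne hdeq,
          hrow1 ⟨(di, dj), hdm⟩ (by omega)]
        exact h01
      · rw [Function.update_of_ne hceq, Function.update_of_ne hdeq]
        exact hT.2 _ _ h1 h2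
    · -- counts
      obtain ⟨u1, u2, u3⟩ := cnt_update T c0 i0 hy
      rw [hTc0] at u2 u3
      have e0 : cnt T i0 = a := by rw [hcnt, if_pos rfl]
      have e1 : cnt T i1 = b := by rw [hcnt, if_neg (Ne.symm hne), if_pos rfl]
      intro i
      by_cases g0 : i = i0
      · subst g0
        rw [if_pos rfl, u1, e0]
      · by_cases g1 : i = i1
        · subst g1
          rw [if_neg (Ne.symm hne), if_pos rfl, u2, e1]
        · rw [if_neg g0, if_neg g1, u3 i g0 g1, hcnt, if_neg g0, if_neg g1]
  · -- flip the i0 at (0, a-1) to i1 : content (a-1, b+1)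
    left
    have hnoj : ∀ j, a ≤ j → ((0:ℕ), j) ∉ D.cells := fun j hj hmem =>
      hpa ((D.mem_cells _).mpr (D.up_left_mem le_rfl hj ((D.mem_cells _).mp hmem)))
    have ha1 : a - 1 < a := by omega
    set c1 : D.cells := ⟨(0, a - 1), hmemD (a - 1) ha1⟩ with hc1def
    have hTc1 : T c1 = i0 := (hz' c1).mpr ⟨rfl, ha1⟩
    have e0 : cnt T i0 = a := by rw [hcnt, if_pos rfl]
    have e1 : cnt T i1 = b := by rw [hcnt, if_neg (Ne.symm hne), if_pos rfl]
    have h1a : ((1:ℕ), a - 1) ∉ D.cells := by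
      intro hmem
      have hmemD1 : ∀ j, j ≤ a - 1 → ((1:ℕ), j) ∈ D.cells := fun j hj =>
        (D.mem_cells _).mpr (D.up_left_mem le_rfl hj ((D.mem_cells _).mp hmem))
      have hle : (Finset.range a).card ≤
          (univ.filter (fun c : D.cells => T c = i1)).card := by
        apply Finset.card_le_card_of_injOn
          (fun j => (⟨(1, min j (a - 1)), hmemD1 _ (min_le_right _ _)⟩ : D.cells))
        · intro j _
          simp only [Finset.mem_filter, Finset.mem_univ, true_and]
          exact Finset.mem_coe.mpr (Finset.mem_filter.mpr ⟨Finset.mem_univ _,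
            hrow1 ⟨(1, min j (a - 1)), hmemD1 _ (min_le_right _ _)⟩ le_rfl⟩)
        · intro j hj k hk hjk
          have hj' : j ≤ a - 1 := by have := Finset.mem_range.mp (Finset.mem_coe.mp hj); omega
          have hk' : k ≤ a - 1 := by have := Finset.mem_range.mp (Finset.mem_coe.mp hk); omega
          have := congrArg (fun c : D.cells => (c : ℕ × ℕ).2) hjk
          simpa [min_eq_left hj', min_eq_left hk'] using this
      rw [Finset.card_range] at hle
      rw [cnt] at e1
      omega
    have hy : i1 ≠ T c1 := by rw [hTc1]; exact Ne.symm hne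
    refine ⟨Function.update T c1 i1, ⟨?_, ?_⟩, ?_⟩
    · -- rows
      rintro ⟨⟨ci, cj⟩, hcm⟩ ⟨⟨di, dj⟩, hdm⟩ h1 h2
      have h1' : ci = di := h1
      have h2' : cj ≤ dj := h2
      by_cases hdeq : (⟨(di, dj), hdm⟩ : D.cells) = c1
      · rw [hdeq, Function.update_self]
        by_cases hceq : (⟨(ci, cj), hcm⟩ : D.cells) = c1
        · rw [hceq, Function.update_self]
        · rw [Function.update_of_ne hceq]
          rcases hvals ⟨(ci, cj), hcm⟩ with h | h
          · exact h.le.trans h01.le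
          · exact h.le
      · by_cases hceq : (⟨(ci, cj), hcm⟩ : D.cells) = c1
        · exfalso
          have hcv : ci = 0 ∧ cj = a - 1 := by
            have := congrArg Subtype.val hceq
            rw [hc1def] at this
            simpa [Prod.mk.injEq] using this
          have hdcoord : ¬ (di = 0 ∧ dj = a - 1) := by
            rintro ⟨x, y⟩
            exact hdeq (Subtype.ext (show (di, dj) = ((0:ℕ), a - 1) by rw [x, y]))
          have hdi : di = 0 := by omega
          have hdj : a ≤ dj := by omega
          exact hnoj dj hdj (hdi ▸ hdm)
        · rw [Function.update_of_ne hceq, Function.update_of_ne hdeq]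
          exact hT.1 _ _ h1 h2
    · -- columns
      rintro ⟨⟨ci, cj⟩, hcm⟩ ⟨⟨di, dj⟩, hdm⟩ h1 h2
      have h1' : cj = dj := h1
      have h2' : ci < di := h2
      by_cases hceq : (⟨(ci, cj), hcm⟩ : D.cells) = c1
      · exfalso
        have hcv : ci = 0 ∧ cj = a - 1 := by
          have := congrArg Subtype.val hceq
          rw [hc1def] at this
          simpa [Prod.mk.injEq] using this
        have : ((1:ℕ), a - 1) ∈ D.cells := by
          refine (D.mem_cells _).mpr (D.up_left_mem (by omega) (by omega)
            ((D.mem_cells _).mp hdm))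
        exact h1a this
      · by_cases hdeq : (⟨(di, dj), hdm⟩ : D.cells) = c1
        · exfalso
          have hdv : di = 0 ∧ dj = a - 1 := by
            have := congrArg Subtype.val hdeq
            rw [hc1def] at this
            simpa [Prod.mk.injEq] using this
          omega
        · rw [Function.update_of_ne hceq, Function.update_of_ne hdeq]
          exact hT.2 _ _ h1 h2
    · -- counts
      obtain ⟨u1, u2, u3⟩ := cnt_update T c1 i1 hy
      rw [hTc1] at u2 u3
      intro i
      by_cases g0 : i = i0
      · subst g0
        rw [if_pos rfl, u2, e0]
      · by_cases g1 : i = i1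
        · subst g1
          rw [if_neg (Ne.symm hne), if_pos rfl, u1, e1]
        · rw [if_neg g0, if_neg g1, u3 i g1 g0, hcnt, if_neg g0, if_neg g1]


lemma main_aux {V : Type} [Fintype V] [DecidableEq V] (G : SimpleGraph V)
    (hcard : 2 ≤ Fintype.card V) (hconn : G.Connected)
    {A B : Finset V} (hd : Disjoint A B) (hu : A ∪ B = Finset.univ)
    (hA : IsStableSet G A) (hB : IsStableSet G B)
    (hG : SchurPositive G) (hba : B.card + 2 ≤ A.card) : False := by
  classical
  set n := Fintype.card V with hn
  obtain ⟨c, hc0, heq⟩ := hG n le_rfl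
  have hN2 : 2 ≤ n := hcard
  have hbpos : 1 ≤ B.card := by
    obtain ⟨u, v, huv⟩ := exists_edge hconn hcard
    rcases Finset.mem_union.mp (hu ▸ Finset.mem_univ u) with h | h
    · rcases Finset.mem_union.mp (hu ▸ Finset.mem_univ v) with h' | h'
      · exact absurd huv (hA u h v h')
      · exact Finset.card_pos.mpr ⟨v, h'⟩
    · exact Finset.card_pos.mpr ⟨u, h⟩
  set i0 : Fin n := ⟨0, by omega⟩ with hi0
  set i1 : Fin n := ⟨1, by omega⟩ with hi1
  have h01 : i0 < i1 := by rw [hi0, hi1]; exact Fin.mk_lt_mk.mpr (by omega)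
  have hne01 : i0 ≠ i1 := ne_of_lt h01
  set P := Finset.univ.filter
    (fun κ : V → Fin n => ∀ u v : V, G.Adj u v → κ u ≠ κ v) with hP
  have key : ∀ m : Fin n →₀ ℕ,
      ((P.filter (fun κ => ∀ i, cnt κ i = m i)).card : ℤ)
        = ∑ μ : n.Partition, c μ *
          (((Finset.univ.filter (fun T : (diagramOf μ).cells → Fin n =>
              IsSSYTof (diagramOf μ) n T)).filter
                (fun T => ∀ i, cnt T i = m i)).card : ℤ) := by
    intro m
    have e1 : csf G n = ∑ κ ∈ P, ∏ v : V, X (κ v) := by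
      rw [hP]; unfold csf; congr!
    have h1 : coeff m (csf G n) = ((P.filter (fun κ => ∀ i, cnt κ i = m i)).card : ℤ) := by
      rw [e1]; exact coeff_count P m
    have h2 : coeff m (∑ μ : n.Partition, c μ • schur n μ)
        = ∑ μ : n.Partition, c μ *
          (((Finset.univ.filter (fun T : (diagramOf μ).cells → Fin n =>
              IsSSYTof (diagramOf μ) n T)).filter
                (fun T => ∀ i, cnt T i = m i)).card : ℤ) := by
      rw [coeff_sum]
      refine Finset.sum_congr rfl fun μ _ => ?_
      rw [coeff_smul, smul_eq_mul]
      congr 1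
      have e2 : schur n μ = ∑ T ∈ Finset.univ.filter
          (fun T : (diagramOf μ).cells → Fin n => IsSSYTof (diagramOf μ) n T),
          ∏ c' : (diagramOf μ).cells, X (T c') := by
        unfold schur schurShape; congr!
      rw [e2]; exact coeff_count _ m
    rw [← h1, ← h2, heq]
  have hclassify : ∀ (κ : V → Fin n) (e0 e1 : ℕ),
      (∀ u v : V, G.Adj u v → κ u ≠ κ v) →
      (∀ i, cnt κ i = dd i0 i1 e0 e1 i) →
      (e0 = A.card ∧ e1 = B.card ∧ Finset.univ.filter (fun v => κ v = i0) = A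
          ∧ Finset.univ.filter (fun v => κ v = i1) = B)
        ∨ (e0 = B.card ∧ e1 = A.card) := by
    intro κ e0 e1 hp hcnt
    have hcnt' : ∀ i, cnt κ i = if i = i0 then e0 else if i = i1 then e1 else 0 := by
      intro i; rw [hcnt i, dd_apply hne01]
    rcases coloring_classify hconn hd hu hA hB hne01 hp hcnt' with
      ⟨f0, f1, g0, g1⟩ | ⟨f0, f1, g0, g1⟩
    · exact Or.inl ⟨g0, g1, f0, f1⟩
    · exact Or.inr ⟨g0, g1⟩
  have hCC1 : (P.filter
      (fun κ => ∀ i, cnt κ i = dd i0 i1 (A.card - 1) (B.card + 1) i)).card = 0 := by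
    rw [Finset.card_eq_zero, Finset.eq_empty_iff_forall_notMem]
    intro κ hκ
    rw [Finset.mem_filter, hP, Finset.mem_filter] at hκ
    rcases hclassify κ _ _ hκ.1.2 hκ.2 with ⟨g0, _, _⟩ | ⟨g0, _⟩ <;> omega
  have hCC3 : (P.filter
      (fun κ => ∀ i, cnt κ i = dd i0 i1 (A.card + 1) (B.card - 1) i)).card = 0 := by
    rw [Finset.card_eq_zero, Finset.eq_empty_iff_forall_notMem]
    intro κ hκ
    rw [Finset.mem_filter, hP, Finset.mem_filter] at hκ
    rcases hclassify κ _ _ hκ.1.2 hκ.2 with ⟨g0, _, _⟩ | ⟨g0, _⟩ <;> omega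
  have hCC2 : (P.filter
      (fun κ => ∀ i, cnt κ i = dd i0 i1 A.card B.card i)).card = 1 := by
    rw [Finset.card_eq_one]
    refine ⟨fun v => if v ∈ A then i0 else i1, ?_⟩
    rw [Finset.eq_singleton_iff_unique_mem]
    constructor
    · rw [Finset.mem_filter, hP, Finset.mem_filter]
      refine ⟨⟨Finset.mem_univ _, ?_⟩, ?_⟩
      · intro u v hadj
        rcases Finset.mem_union.mp (hu ▸ Finset.mem_univ u) with h | h <;>
          rcases Finset.mem_union.mp (hu ▸ Finset.mem_univ v) with h' | h'
        · exact absurd hadj (hA u h v h')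
        · simp only [h, if_pos, (mem_compl_iff hd hu v).mp h', if_neg]
          simpa using hne01
        · simp only [(mem_compl_iff hd hu u).mp h, if_neg, h', if_pos]
          simpa using (Ne.symm hne01)
        · exact absurd hadj (hB u h v h')
      · intro i
        rw [dd_apply hne01]
        have hf0 : Finset.univ.filter (fun v => (if v ∈ A then i0 else i1) = i0) = A := by
          ext v
          by_cases hv : v ∈ A <;> simp [hv, Ne.symm hne01]
        have hf1 : Finset.univ.filter (fun v => (if v ∈ A then i0 else i1) = i1) = B := by
          ext v
          by_cases hv : v ∈ A <;> simp [hv, hne01, mem_compl_iff hd hu v]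
        by_cases g0 : i = i0
        · subst g0; rw [if_pos rfl, cnt, hf0]
        · by_cases g1 : i = i1
          · subst g1; rw [if_neg (Ne.symm hne01), if_pos rfl, cnt, hf1]
          · rw [if_neg g0, if_neg g1, cnt, Finset.card_eq_zero,
              Finset.eq_empty_iff_forall_notMem]
            intro v hv
            rw [Finset.mem_filter] at hv
            by_cases hvA : v ∈ A
            · rw [if_pos hvA] at hv; exact g0 hv.2.symm
            · rw [if_neg hvA] at hv; exact g1 hv.2.symm
    · intro κ hκ
      rw [Finset.mem_filter, hP, Finset.mem_filter] at hκ
      rcases hclassify κ _ _ hκ.1.2 hκ.2 with ⟨_, _, f0, f1⟩ | ⟨g0, _⟩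
      · funext v
        by_cases hv : v ∈ A
        · rw [if_pos hv, ← f0] at *
          exact (Finset.mem_filter.mp hv).2
        · rw [if_neg hv]
          have hvB : v ∈ B := (mem_compl_iff hd hu v).mpr hv
          rw [← f1] at hvB
          exact (Finset.mem_filter.mp hvB).2
      · omega
  have hsum0 : ∀ (e0 e1 : ℕ),
      (P.filter (fun κ => ∀ i, cnt κ i = dd i0 i1 e0 e1 i)).card = 0 →
      ∀ μ : n.Partition, c μ *
        (((Finset.univ.filter (fun T : (diagramOf μ).cells → Fin n =>
            IsSSYTof (diagramOf μ) n T)).filter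
              (fun T => ∀ i, cnt T i = dd i0 i1 e0 e1 i)).card : ℤ) = 0 := by
    intro e0 e1 h0 μ
    have h := key (dd i0 i1 e0 e1)
    rw [h0] at h
    norm_num at h
    have hterm := (Finset.sum_eq_zero_iff_of_nonneg
      (fun ν _ => mul_nonneg (hc0 ν) (by positivity))).mp h.symm
    exact hterm μ (Finset.mem_univ μ)
  have key2 := key (dd i0 i1 A.card B.card)
  rw [hCC2] at key2
  have hzero : ∑ μ : n.Partition, c μ *
      (((Finset.univ.filter (fun T : (diagramOf μ).cells → Fin n =>
          IsSSYTof (diagramOf μ) n T)).filter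
            (fun T => ∀ i, cnt T i = dd i0 i1 A.card B.card i)).card : ℤ) = 0 := by
    refine Finset.sum_eq_zero fun μ _ => ?_
    by_cases hK : ((Finset.univ.filter (fun T : (diagramOf μ).cells → Fin n =>
        IsSSYTof (diagramOf μ) n T)).filter
          (fun T => ∀ i, cnt T i = dd i0 i1 A.card B.card i)).card = 0
    · rw [hK]; simp
    · obtain ⟨T, hT⟩ := Finset.card_pos.mp (Nat.pos_of_ne_zero hK)
      rw [Finset.mem_filter, Finset.mem_filter] at hT
      obtain ⟨⟨_, hssyt⟩, hTc⟩ := hT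
      have hTc' : ∀ i, cnt T i = if i = i0 then A.card else if i = i1 then B.card else 0 :=
        fun i => by rw [hTc i, dd_apply hne01]
      have hcz : c μ = 0 := by
        rcases ssyt_surgery (diagramOf μ) h01 hba hssyt hTc' with
          ⟨T', hT', hcnt'⟩ | ⟨T', hT', hcnt'⟩
        · have hmem : T' ∈ (Finset.univ.filter (fun T : (diagramOf μ).cells → Fin n =>
              IsSSYTof (diagramOf μ) n T)).filter
                (fun T => ∀ i, cnt T i = dd i0 i1 (A.card - 1) (B.card + 1) i) := by
            rw [Finset.mem_filter, Finset.mem_filter]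
            exact ⟨⟨Finset.mem_univ _, hT'⟩, fun i => by rw [dd_apply hne01]; exact hcnt' i⟩
          have hpos := Finset.card_pos.mpr ⟨T', hmem⟩
          rcases mul_eq_zero.mp (hsum0 (A.card - 1) (B.card + 1) hCC1 μ) with h | h
          · exact h
          · exfalso; rw [Int.natCast_eq_zero] at h; omega
        · have hmem : T' ∈ (Finset.univ.filter (fun T : (diagramOf μ).cells → Fin n =>
              IsSSYTof (diagramOf μ) n T)).filter
                (fun T => ∀ i, cnt T i = dd i0 i1 (A.card + 1) (B.card - 1) i) := by
            rw [Finset.mem_filter, Finset.mem_filter]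
            exact ⟨⟨Finset.mem_univ _, hT'⟩, fun i => by rw [dd_apply hne01]; exact hcnt' i⟩
          have hpos := Finset.card_pos.mpr ⟨T', hmem⟩
          rcases mul_eq_zero.mp (hsum0 (A.card + 1) (B.card - 1) hCC3 μ) with h | h
          · exact h
          · exfalso; rw [Int.natCast_eq_zero] at h; omega
      rw [hcz, zero_mul]
  rw [hzero] at key2
  norm_num at key2

/-- **Theorem.** Every Schur positive connected bipartite graph on at least two
vertices has a balanced stable bipartition: a partition of the vertex set into two
stable sets whose cardinalities differ by at most `1`. -/
theorem balanced_bipartition_of_schurPositive {V : Type} [Fintype V] [DecidableEq V]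
    (G : SimpleGraph V) (hcard : 2 ≤ Fintype.card V) (hconn : G.Connected)
    (hbip : ∃ A B : Finset V, Disjoint A B ∧ A ∪ B = Finset.univ ∧
      IsStableSet G A ∧ IsStableSet G B)
    (hG : SchurPositive G) :
    ∃ A B : Finset V, Disjoint A B ∧ A ∪ B = Finset.univ ∧
      IsStableSet G A ∧ IsStableSet G B ∧
      A.card ≤ B.card + 1 ∧ B.card ≤ A.card + 1 := by
  obtain ⟨A, B, hd, hu, hA, hB⟩ := hbip
  by_cases h1 : A.card ≤ B.card + 1
  · by_cases h2 : B.card ≤ A.card + 1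
    · exact ⟨A, B, hd, hu, hA, hB, h1, h2⟩
    · exact absurd (main_aux G hcard hconn hd.symm
        (by rw [Finset.union_comm] at hu; exact hu) hB hA hG (by omega)) not_false
  · exact absurd (main_aux G hcard hconn hd hu hA hB hG (by omega)) not_false
end
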